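/- Let n ≥ 2 and let A be an n×n real matrix with nonnegative entries and a_{11} = 0, whose eigenvalues (roots of the characteristic polynomial, with multiplicity) are 1 with multiplicity one and a real number λ with multiplicity n − 1. Then λ ≤ (n − 2)/(2(n − 1)). -/

import Mathlib

open Matrix Polynomial

/-- The eigenvalues of a real square matrix: the multiset of roots (with multiplicity)
of its characteristic polynomial over `ℂ`. -/
noncomputable def eigs {n : ℕ} (A : Matrix (Fin n) (Fin n) ℝ) : Multiset ℂ :=
  ((A.map Complex.ofReal).charpoly).roots

/-- The spectral radius: the maximum of `|λ|` over the eigenvalues `λ`. -/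
noncomputable def specRad {n : ℕ} (A : Matrix (Fin n) (Fin n) ℝ) : ℝ :=
  sSup {r : ℝ | ∃ μ ∈ eigs A, r = ‖μ‖}

/-- The spread: the maximum of `|λ - μ|` over pairs of eigenvalues `λ, μ`. -/
noncomputable def spread {n : ℕ} (A : Matrix (Fin n) (Fin n) ℝ) : ℝ :=
  sSup {r : ℝ | ∃ μ ∈ eigs A, ∃ ν ∈ eigs A, r = ‖μ - ν‖}
lemma myEvalCharpoly {m : ℕ} (M : Matrix (Fin m) (Fin m) ℂ) (r : ℂ) :
    M.charpoly.eval r = (r • (1 : Matrix (Fin m) (Fin m) ℂ) - M).det := by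
  rw [Matrix.charpoly, ← Polynomial.coe_evalRingHom, RingHom.map_det]
  congr 1
  ext i j
  by_cases h : i = j
  · subst h
    simp [charmatrix_apply_eq, Matrix.one_apply, Matrix.smul_apply, Matrix.sub_apply]
  · simp [charmatrix_apply_ne _ _ _ h, Matrix.one_apply, h, Matrix.smul_apply, Matrix.sub_apply]

lemma myRoots (a b : ℂ) (m : ℕ) :
    ((X - C a) * (X - C b) ^ m).roots = a ::ₘ Multiset.replicate m b := by
  rw [roots_mul (((monic_X_sub_C a).mul ((monic_X_sub_C b).pow m)).ne_zero),
    roots_X_sub_C, roots_pow, roots_X_sub_C, Multiset.nsmul_singleton,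
    Multiset.singleton_add]

theorem eigenvalue_le_of_two_point_spectrum (n : ℕ) (hn : 2 ≤ n)
    (A : Matrix (Fin n) (Fin n) ℝ)
    (hA : ∀ i j, 0 ≤ A i j)
    (h11 : A ⟨0, by omega⟩ ⟨0, by omega⟩ = 0)
    (lam : ℝ)
    (heig : eigs A = (1 : ℂ) ::ₘ Multiset.replicate (n - 1) (lam : ℂ)) :
    lam ≤ ((n : ℝ) - 2) / (2 * ((n : ℝ) - 1)) := by
  obtain ⟨m, rfl⟩ : ∃ m, n = m + 1 := ⟨n - 1, by omega⟩
  have hm : 1 ≤ m := by omega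
  simp only [Nat.add_sub_cancel] at heig
  set B := A.map Complex.ofReal with hB
  have hroots : B.charpoly.roots = (1 : ℂ) ::ₘ Multiset.replicate m (lam : ℂ) := heig
  -- the characteristic polynomial of B
  have hcard : Multiset.card B.charpoly.roots = B.charpoly.natDegree := by
    rw [Matrix.charpoly_natDegree_eq_dim, Fintype.card_fin, hroots]
    simp
  have hpc : B.charpoly = (X - C 1) * (X - C (lam : ℂ)) ^ m := by
    rw [← prod_multiset_X_sub_C_of_monic_of_roots_card_eq B.charpoly_monic hcard, hroots,
      Multiset.map_cons, Multiset.map_replicate, Multiset.prod_cons, Multiset.prod_replicate]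
  -- trace of A
  have htrB : B.trace = 1 + (m : ℂ) * (lam : ℂ) := by
    rw [Matrix.trace_eq_sum_roots_charpoly, hroots, Multiset.sum_cons,
      Multiset.sum_replicate, nsmul_eq_mul]
  have htrBA : B.trace = ((A.trace : ℝ) : ℂ) := by
    simp [Matrix.trace, Matrix.diag, hB, Matrix.map_apply]
  have htA : A.trace = 1 + (m : ℝ) * lam := by
    have : ((A.trace : ℝ) : ℂ) = ((1 + (m : ℝ) * lam : ℝ) : ℂ) := by
      rw [← htrBA, htrB]; push_cast; ring
    exact_mod_cast this
  -- charpoly of B ^ 2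
  have hq : (B ^ 2).charpoly = (X - C 1) * (X - C ((lam : ℂ) ^ 2)) ^ m := by
    apply Polynomial.funext
    intro r
    obtain ⟨s, hs⟩ := IsAlgClosed.exists_pow_nat_eq r (n := 2) (by norm_num)
    have hc : Commute (s • (1 : Matrix (Fin (m + 1)) (Fin (m + 1)) ℂ)) B :=
      (Commute.one_left B).smul_left s
    have hfact : r • (1 : Matrix (Fin (m + 1)) (Fin (m + 1)) ℂ) - B ^ 2
        = (s • 1 + B) * (s • 1 - B) := by
      rw [← hc.sq_sub_sq, _root_.smul_pow, one_pow, hs]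
    have h1 : (s • (1 : Matrix (Fin (m + 1)) (Fin (m + 1)) ℂ) - B).det
        = B.charpoly.eval s := (myEvalCharpoly B s).symm
    have h2 : (s • (1 : Matrix (Fin (m + 1)) (Fin (m + 1)) ℂ) + B).det
        = (-1 : ℂ) ^ (m + 1) * B.charpoly.eval (-s) := by
      have hneg : s • (1 : Matrix (Fin (m + 1)) (Fin (m + 1)) ℂ) + B
          = -((-s) • 1 - B) := by
        rw [neg_sub, neg_smul, sub_neg_eq_add]
        exact add_comm _ _
      rw [hneg, Matrix.det_neg, myEvalCharpoly, Fintype.card_fin]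
    rw [myEvalCharpoly, hfact, Matrix.det_mul, h1, h2, hpc]
    simp only [eval_mul, eval_pow, eval_sub, eval_X, eval_C, eval_one]
    subst hs
    have a1 : (s ^ 2 - (lam : ℂ) ^ 2) = ((-1) * (-s - (lam : ℂ))) * (s - (lam : ℂ)) := by ring
    rw [a1, mul_pow, mul_pow, pow_succ]
    ring
  have hroots2 : (B ^ 2).charpoly.roots = (1 : ℂ) ::ₘ Multiset.replicate m ((lam : ℂ) ^ 2) := by
    rw [hq, myRoots]
  have htrB2 : (B ^ 2).trace = 1 + (m : ℂ) * (lam : ℂ) ^ 2 := by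
    rw [Matrix.trace_eq_sum_roots_charpoly, hroots2, Multiset.sum_cons,
      Multiset.sum_replicate, nsmul_eq_mul]
  have hB2 : B ^ 2 = (A ^ 2).map Complex.ofReal := by
    ext i j
    simp [pow_two, Matrix.mul_apply, Matrix.map_apply, hB]
  have htA2 : (A ^ 2).trace = 1 + (m : ℝ) * lam ^ 2 := by
    have h := htrB2
    rw [hB2] at h
    have h' : (((A ^ 2).trace : ℝ) : ℂ) = 1 + (m : ℂ) * (lam : ℂ) ^ 2 := by
      rw [← h]
      simp [Matrix.trace, Matrix.diag, Matrix.map_apply]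
    exact_mod_cast h'
  -- now the real analysis
  have hsum1 : ∑ i, A i i = 1 + (m : ℝ) * lam := htA
  have hsum2 : ∑ i, ∑ j, A i j * A j i = 1 + (m : ℝ) * lam ^ 2 := by
    have : (A ^ 2).trace = ∑ i, ∑ j, A i j * A j i := by
      simp [Matrix.trace, Matrix.diag, pow_two, Matrix.mul_apply]
    rw [← this, htA2]
  have hd : ∑ i, (A i i) ^ 2 ≤ ∑ i, ∑ j, A i j * A j i := by
    refine Finset.sum_le_sum fun i _ => ?_
    have := Finset.single_le_sum (f := fun j => A i j * A j i)
      (fun j _ => mul_nonneg (hA i j) (hA j i)) (Finset.mem_univ i)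
    simpa [sq] using this
  set z : Fin (m + 1) := ⟨0, by omega⟩ with hz
  have hcs : (∑ i, A i i) ^ 2 ≤ (m : ℝ) * ∑ i, (A i i) ^ 2 := by
    have h0 : ∑ i, A i i = ∑ i ∈ Finset.univ.erase z, A i i := by
      rw [← Finset.add_sum_erase _ _ (Finset.mem_univ z), h11, zero_add]
    rw [h0]
    calc (∑ i ∈ Finset.univ.erase z, A i i) ^ 2
        ≤ (Finset.univ.erase z).card * ∑ i ∈ Finset.univ.erase z, (A i i) ^ 2 :=
          sq_sum_le_card_mul_sum_sq
      _ ≤ (m : ℝ) * ∑ i, (A i i) ^ 2 := by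
          rw [Finset.card_erase_of_mem (Finset.mem_univ z), Finset.card_univ, Fintype.card_fin]
          simp only [Nat.add_sub_cancel]
          refine mul_le_mul_of_nonneg_left ?_ (by positivity)
          exact Finset.sum_le_sum_of_subset_of_nonneg (Finset.subset_univ _)
            (fun i _ _ => sq_nonneg _)
  have hfin : (1 + (m : ℝ) * lam) ^ 2 ≤ (m : ℝ) * (1 + (m : ℝ) * lam ^ 2) := by
    calc (1 + (m : ℝ) * lam) ^ 2 = (∑ i, A i i) ^ 2 := by rw [hsum1]
      _ ≤ (m : ℝ) * ∑ i, (A i i) ^ 2 := hcs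
      _ ≤ (m : ℝ) * ∑ i, ∑ j, A i j * A j i := by
          exact mul_le_mul_of_nonneg_left hd (by positivity)
      _ = (m : ℝ) * (1 + (m : ℝ) * lam ^ 2) := by rw [hsum2]
  have hm1 : (1 : ℝ) ≤ (m : ℝ) := by exact_mod_cast hm
  have hden : ((↑(m + 1) : ℝ) - 2) / (2 * ((↑(m + 1) : ℝ) - 1)) = ((m : ℝ) - 1) / (2 * m) := by
    push_cast
    ring_nf
  rw [hden, le_div_iff₀ (by linarith)]
  nlinarith [hfin]
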